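/- arXiv:2103.10272 — 2 statements merged into one kernel-verified Lean document; each statement's English description precedes it below -/
import Mathlib

section
/- Major-Minor Duality: if f is a chromatic/whole tone musical icosahedron such that for every x the points f(x), f(x+4), f(x+7) form a golden triangle (all major triads golden), then the bijection g defined by g(x) = f(−x) is also a chromatic/whole tone musical icosahedron, and for every x the points g(x), g(x+3), g(x+7) form a golden triangle (all minor triads of g are golden). -/
noncomputable section

/-- Points of `ℝ³` with the Euclidean metric. -/
abbrev E3 : Type := EuclideanSpace ℝ (Fin 3)

/-- Constructor for explicit points of `E3`. -/
def pt (a b c : ℝ) : E3 := (WithLp.equiv 2 (Fin 3 → ℝ)).symm ![a, b, c]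

/-- The vertex set of the regular icosahedron with edge length 2: the twelve points
`(0,±1,±φ)`, `(±1,±φ,0)`, `(±φ,0,±1)` where `φ` is the golden ratio. -/
def icoVertexSet : Set E3 :=
  {p | ∃ a b : ℝ, (a = 1 ∨ a = -1) ∧ (b = Real.goldenRatio ∨ b = -Real.goldenRatio) ∧
    (p = pt 0 a b ∨ p = pt a b 0 ∨ p = pt b 0 a)}

/-- The type of vertices of the icosahedron. -/
abbrev IcoVert : Type := {p : E3 // p ∈ icoVertexSet}

/-- The icosahedron graph: two vertices are adjacent iff their Euclidean distance
equals 2 (the edge length). -/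
def icoGraph : SimpleGraph IcoVert where
  Adj u v := dist (u : E3) (v : E3) = 2
  symm := ⟨by intro u v h; rwa [dist_comm] at h⟩
  loopless := ⟨by intro u h; rw [dist_self] at h; norm_num at h⟩

/-- The chromatic neighboring condition. -/
def Chromatic (f : ZMod 12 → IcoVert) : Prop :=
  ∀ x : ZMod 12, icoGraph.Adj (f x) (f (x + 1))

/-- The Pythagorean-chain neighboring condition. -/
def Pythagorean (f : ZMod 12 → IcoVert) : Prop :=
  ∀ x : ZMod 12, icoGraph.Adj (f x) (f (x + 7))

/-- The whole-tone neighboring condition for the whole tone scale containing `C`. -/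
def WholeToneEven (f : ZMod 12 → IcoVert) : Prop :=
  ∀ x : ZMod 12, Even x → icoGraph.Adj (f x) (f (x + 2))

/-- The whole-tone neighboring condition for the whole tone scale containing `C♯`. -/
def WholeToneOdd (f : ZMod 12 → IcoVert) : Prop :=
  ∀ x : ZMod 12, Odd x → icoGraph.Adj (f x) (f (x + 2))

/-- A chromatic/whole tone musical icosahedron. -/
def ChromaticWT (f : ZMod 12 → IcoVert) : Prop :=
  Chromatic f ∧ (WholeToneEven f ∨ WholeToneOdd f)

/-- A Pythagorean/whole tone musical icosahedron. -/
def PythagoreanWT (f : ZMod 12 → IcoVert) : Prop :=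
  Pythagorean f ∧ (WholeToneEven f ∨ WholeToneOdd f)

/-- Musical isomorphism: post-composition with a graph automorphism. -/
def MusIso (f g : ZMod 12 → IcoVert) : Prop :=
  ∃ σ : icoGraph ≃g icoGraph, ∀ x : ZMod 12, g x = σ (f x)

/-- Hexagon-icosahedron symmetry: raising all tones by a whole tone corresponds to a
symmetry transformation of the icosahedron. -/
def HexSym (f : ZMod 12 → IcoVert) : Prop :=
  ∃ σ : icoGraph ≃g icoGraph, ∀ x : ZMod 12, f (x + 2) = σ (f x)

/-- Three points form a golden triangle: pairwise distances `2φ, 2φ, 2`. -/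
def IsGoldenTriangle (p q r : E3) : Prop :=
  ({dist p q, dist q r, dist p r} : Multiset ℝ) =
    ({2 * Real.goldenRatio, 2 * Real.goldenRatio, 2} : Multiset ℝ)

/-- Three points form a golden gnomon: pairwise distances `2, 2, 2φ`. -/
def IsGoldenGnomon (p q r : E3) : Prop :=
  ({dist p q, dist q r, dist p r} : Multiset ℝ) =
    ({2, 2, 2 * Real.goldenRatio} : Multiset ℝ)

lemma goldenTriangle_rev {p q r : E3} (h : IsGoldenTriangle p q r) :
    IsGoldenTriangle r q p := by
  unfold IsGoldenTriangle at h ⊢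
  rw [dist_comm r q, dist_comm q p, dist_comm r p, ← h]
  exact Multiset.cons_swap _ _ _

/-- **Major-Minor Duality.** If all major triads of a chromatic/whole tone musical
icosahedron `f` are set on golden triangles, then `x ↦ f (-x)` is again a chromatic/whole
tone musical icosahedron, all of whose minor triads are set on golden triangles. -/
theorem major_minor_duality (f : ZMod 12 → IcoVert)
    (hf : Function.Bijective f) (hcwt : ChromaticWT f)
    (hmaj : ∀ x : ZMod 12, IsGoldenTriangle (f x : E3) (f (x + 4) : E3) (f (x + 7) : E3)) :
    Function.Bijective (fun x : ZMod 12 => f (-x)) ∧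
    ChromaticWT (fun x : ZMod 12 => f (-x)) ∧
    ∀ x : ZMod 12,
      IsGoldenTriangle (f (-x) : E3) (f (-(x + 3)) : E3) (f (-(x + 7)) : E3) := by
  refine ⟨hf.comp neg_involutive.bijective, ⟨?_, ?_⟩, ?_⟩
  · intro x
    have h := hcwt.1 (-(x + 1))
    rw [show -(x + 1) + 1 = -x by ring] at h
    exact h.symm
  · rcases hcwt.2 with h | h
    · left
      intro x hx
      have hx2 : Even (-(x + 2)) := by
        obtain ⟨k, hk⟩ := hx
        exact ⟨-k - 1, by rw [hk]; ring⟩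
      have h2 := h (-(x + 2)) hx2
      rw [show -(x + 2) + 2 = -x by ring] at h2
      exact h2.symm
    · right
      intro x hx
      have hx2 : Odd (-(x + 2)) := by
        obtain ⟨k, hk⟩ := hx
        exact ⟨-k - 2, by rw [hk]; ring⟩
      have h2 := h (-(x + 2)) hx2
      rw [show -(x + 2) + 2 = -x by ring] at h2
      exact h2.symm
  · intro x
    have h := hmaj (-(x + 7))
    rw [show -(x + 7) + 4 = -(x + 3) by ring, show -(x + 7) + 7 = -x by ring] at h
    exact goldenTriangle_rev h

end
end

section
/- There are exactly 60 three-element subsets of the vertex set of the icosahedron (the 12 points (0,±1,±φ), (±1,±φ,0), (±φ,0,±1) in ℝ³) that form a golden triangle, i.e., whose pairwise Euclidean distances are 2φ, 2φ, 2. -/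
noncomputable section

-- auxiliary
def zmul (x y : ℤ × ℤ) : ℤ × ℤ := (x.1*y.1 + x.2*y.2, x.1*y.2 + x.2*y.1 + x.2*y.2)

def ev (x : ℤ × ℤ) : ℝ := x.1 + x.2 * Real.goldenRatio

lemma ev_mul (x y : ℤ × ℤ) : ev (zmul x y) = ev x * ev y := by
  simp only [ev, zmul]
  push_cast
  linear_combination (x.2 * y.2 : ℝ) * Real.goldenRatio_sq - (x.2 * y.2 / 2 : ℝ) * Real.sq_sqrt (show (0:ℝ) ≤ 5 by norm_num)

lemma ev_sub (x y : ℤ × ℤ) : ev (x - y) = ev x - ev y := by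
  simp only [ev, Prod.fst_sub, Prod.snd_sub]; push_cast; ring

lemma ev_add (x y : ℤ × ℤ) : ev (x + y) = ev x + ev y := by
  simp only [ev, Prod.fst_add, Prod.snd_add]; push_cast; ring

lemma ev_inj : Function.Injective ev := by
  intro x y h
  by_cases h2 : x.2 = y.2
  · have : (x.1 : ℝ) = y.1 := by
      simp only [ev, h2] at h; linarith
    exact Prod.ext (by exact_mod_cast this) h2
  · exfalso
    have hne : (x.2 - y.2 : ℤ) ≠ 0 := sub_ne_zero.mpr h2
    have : Irrational ((x.2 - y.2 : ℤ) * Real.goldenRatio) := Real.goldenRatio_irrational.intCast_mul hne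
    have heq : ((x.2 - y.2 : ℤ) : ℝ) * Real.goldenRatio = ((y.1 - x.1 : ℤ) : ℝ) := by
      simp only [ev] at h; push_cast; linarith
    rw [heq] at this
    exact (Int.not_irrational _) this

def cc : Fin 12 → Fin 3 → ℤ × ℤ :=
![![(0,0),(1,0),(0,1)], ![(0,0),(1,0),(0,-1)], ![(0,0),(-1,0),(0,1)], ![(0,0),(-1,0),(0,-1)],
  ![(1,0),(0,1),(0,0)], ![(1,0),(0,-1),(0,0)], ![(-1,0),(0,1),(0,0)], ![(-1,0),(0,-1),(0,0)],
  ![(0,1),(0,0),(1,0)], ![(0,1),(0,0),(-1,0)], ![(0,-1),(0,0),(1,0)], ![(0,-1),(0,0),(-1,0)]]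

def vv (i : Fin 12) : E3 := pt (ev (cc i 0)) (ev (cc i 1)) (ev (cc i 2))

def dd (i j : Fin 12) : ℤ × ℤ :=
  zmul (cc i 0 - cc j 0) (cc i 0 - cc j 0) + zmul (cc i 1 - cc j 1) (cc i 1 - cc j 1)
    + zmul (cc i 2 - cc j 2) (cc i 2 - cc j 2)

lemma pt_apply (a b c : ℝ) (k : Fin 3) : pt a b c k = ![a, b, c] k := rfl

lemma dist_sq (i j : Fin 12) : dist (vv i) (vv j) ^ 2 = ev (dd i j) := by
  rw [EuclideanSpace.dist_eq, Real.sq_sqrt (by positivity)]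
  rw [Fin.sum_univ_three]
  simp only [vv, pt_apply, Matrix.cons_val_zero, Matrix.cons_val_one, Matrix.head_cons,
    Matrix.cons_val_two, Matrix.tail_cons]
  simp only [Real.dist_eq, sq_abs]
  rw [dd, ev_add, ev_add, ev_mul, ev_mul, ev_mul, ev_sub, ev_sub, ev_sub]
  ring

lemma dist_of_dd_edge {i j : Fin 12} (h : dd i j = (4, 0)) : dist (vv i) (vv j) = 2 := by
  have h2 : dist (vv i) (vv j) ^ 2 = 4 := by
    rw [dist_sq, h]; norm_num [ev]
  nlinarith [dist_nonneg (x := vv i) (y := vv j)]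

lemma dist_of_dd_long {i j : Fin 12} (h : dd i j = (4, 4)) :
    dist (vv i) (vv j) = 2 * Real.goldenRatio := by
  have h2 : dist (vv i) (vv j) ^ 2 = (2 * Real.goldenRatio) ^ 2 := by
    rw [dist_sq, h]
    have := Real.goldenRatio_sq
    simp only [ev]; push_cast; nlinarith [Real.goldenRatio_sq]
  nlinarith [dist_nonneg (x := vv i) (y := vv j), Real.goldenRatio_pos]

lemma dd_of_dist_edge {i j : Fin 12} (h : dist (vv i) (vv j) = 2) : dd i j = (4, 0) := by
  apply ev_inj
  rw [← dist_sq, h]; norm_num [ev]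

lemma dd_of_dist_long {i j : Fin 12} (h : dist (vv i) (vv j) = 2 * Real.goldenRatio) :
    dd i j = (4, 4) := by
  apply ev_inj
  rw [← dist_sq, h]
  simp only [ev]; push_cast; nlinarith [Real.goldenRatio_sq]

lemma vv_inj : Function.Injective vv := by
  intro i j h
  have h0 : dist (vv i) (vv j) = 0 := by rw [h, dist_self]
  have : ev (dd i j) = ev (0, 0) := by
    rw [← dist_sq, h0]; norm_num [ev]
  have hd : dd i j = (0, 0) := ev_inj this
  have key : ∀ i j : Fin 12, dd i j = (0, 0) → i = j := by decide
  exact key i j hd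

lemma vv0 : vv 0 = pt 0 1 Real.goldenRatio := by
  show pt (ev (0,0)) (ev (1,0)) (ev (0,1)) = _; norm_num [ev]
lemma vv1 : vv 1 = pt 0 1 (-Real.goldenRatio) := by
  show pt (ev (0,0)) (ev (1,0)) (ev (0,-1)) = _; norm_num [ev]
lemma vv2 : vv 2 = pt 0 (-1) Real.goldenRatio := by
  show pt (ev (0,0)) (ev (-1,0)) (ev (0,1)) = _; norm_num [ev]
lemma vv3 : vv 3 = pt 0 (-1) (-Real.goldenRatio) := by
  show pt (ev (0,0)) (ev (-1,0)) (ev (0,-1)) = _; norm_num [ev]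
lemma vv4 : vv 4 = pt 1 Real.goldenRatio 0 := by
  show pt (ev (1,0)) (ev (0,1)) (ev (0,0)) = _; norm_num [ev]
lemma vv5 : vv 5 = pt 1 (-Real.goldenRatio) 0 := by
  show pt (ev (1,0)) (ev (0,-1)) (ev (0,0)) = _; norm_num [ev]
lemma vv6 : vv 6 = pt (-1) Real.goldenRatio 0 := by
  show pt (ev (-1,0)) (ev (0,1)) (ev (0,0)) = _; norm_num [ev]
lemma vv7 : vv 7 = pt (-1) (-Real.goldenRatio) 0 := by
  show pt (ev (-1,0)) (ev (0,-1)) (ev (0,0)) = _; norm_num [ev]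
lemma vv8 : vv 8 = pt Real.goldenRatio 0 1 := by
  show pt (ev (0,1)) (ev (0,0)) (ev (1,0)) = _; norm_num [ev]
lemma vv9 : vv 9 = pt Real.goldenRatio 0 (-1) := by
  show pt (ev (0,1)) (ev (0,0)) (ev (-1,0)) = _; norm_num [ev]
lemma vv10 : vv 10 = pt (-Real.goldenRatio) 0 1 := by
  show pt (ev (0,-1)) (ev (0,0)) (ev (1,0)) = _; norm_num [ev]
lemma vv11 : vv 11 = pt (-Real.goldenRatio) 0 (-1) := by
  show pt (ev (0,-1)) (ev (0,0)) (ev (-1,0)) = _; norm_num [ev]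

lemma vv_mem (i : Fin 12) : vv i ∈ icoVertexSet := by
  fin_cases i
  exacts [⟨1, Real.goldenRatio, Or.inl rfl, Or.inl rfl, Or.inl vv0⟩,
    ⟨1, -Real.goldenRatio, Or.inl rfl, Or.inr rfl, Or.inl vv1⟩,
    ⟨-1, Real.goldenRatio, Or.inr rfl, Or.inl rfl, Or.inl vv2⟩,
    ⟨-1, -Real.goldenRatio, Or.inr rfl, Or.inr rfl, Or.inl vv3⟩,
    ⟨1, Real.goldenRatio, Or.inl rfl, Or.inl rfl, Or.inr (Or.inl vv4)⟩,
    ⟨1, -Real.goldenRatio, Or.inl rfl, Or.inr rfl, Or.inr (Or.inl vv5)⟩,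
    ⟨-1, Real.goldenRatio, Or.inr rfl, Or.inl rfl, Or.inr (Or.inl vv6)⟩,
    ⟨-1, -Real.goldenRatio, Or.inr rfl, Or.inr rfl, Or.inr (Or.inl vv7)⟩,
    ⟨1, Real.goldenRatio, Or.inl rfl, Or.inl rfl, Or.inr (Or.inr vv8)⟩,
    ⟨-1, Real.goldenRatio, Or.inr rfl, Or.inl rfl, Or.inr (Or.inr vv9)⟩,
    ⟨1, -Real.goldenRatio, Or.inl rfl, Or.inr rfl, Or.inr (Or.inr vv10)⟩,
    ⟨-1, -Real.goldenRatio, Or.inr rfl, Or.inr rfl, Or.inr (Or.inr vv11)⟩]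

lemma vv_surj {p : E3} (hp : p ∈ icoVertexSet) : ∃ i, vv i = p := by
  obtain ⟨a, b, (rfl | rfl), (rfl | rfl), (rfl | rfl | rfl)⟩ := hp
  exacts [⟨0, vv0⟩, ⟨4, vv4⟩, ⟨8, vv8⟩, ⟨1, vv1⟩, ⟨5, vv5⟩, ⟨10, vv10⟩,
    ⟨2, vv2⟩, ⟨6, vv6⟩, ⟨9, vv9⟩, ⟨3, vv3⟩, ⟨7, vv7⟩, ⟨11, vv11⟩]

def goodT (x : Fin 12 × Fin 12 × Fin 12) : Prop :=
  dd x.1 x.2.1 = (4, 4) ∧ dd x.2.1 x.2.2 = (4, 4) ∧ dd x.1 x.2.2 = (4, 0)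

instance : DecidablePred goodT := fun x => by unfold goodT; infer_instance

def TT : Finset (Finset (Fin 12)) :=
  (Finset.univ.filter goodT).image (fun x => {x.1, x.2.1, x.2.2})

set_option maxRecDepth 100000 in
set_option maxHeartbeats 4000000 in
lemma TT_card : TT.card = 60 := by decide


set_option maxRecDepth 10000 in
/-- There are exactly 60 three-element subsets of the vertex set of the icosahedron that
form a golden triangle. -/
theorem sixty_golden_triangles :
    Set.ncard {s : Set E3 | s ⊆ icoVertexSet ∧
      ∃ p q r : E3, s = {p, q, r} ∧ IsGoldenTriangle p q r} = 60 := by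
  classical
  have himg : Function.Injective (fun t : Finset (Fin 12) => vv '' (↑t : Set (Fin 12))) := by
    intro t1 t2 h
    exact Finset.coe_injective ((Set.image_injective.mpr vv_inj) h)
  have hxy : (2 : ℝ) ≠ 2 * Real.goldenRatio := by nlinarith [Real.one_lt_goldenRatio]
  have key : {s : Set E3 | s ⊆ icoVertexSet ∧
      ∃ p q r : E3, s = {p, q, r} ∧ IsGoldenTriangle p q r}
      = ↑(TT.image (fun t : Finset (Fin 12) => vv '' (t : Set (Fin 12)))) := by
    ext s
    simp only [Set.mem_setOf_eq, Finset.coe_image, Set.mem_image, Finset.mem_coe]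
    constructor
    · rintro ⟨hsub, p, q, r, rfl, hg⟩
      obtain ⟨i, rfl⟩ := vv_surj (hsub (show p ∈ ({p, q, r} : Set E3) by simp))
      obtain ⟨j, rfl⟩ := vv_surj (hsub (show q ∈ ({vv i, q, r} : Set E3) by simp))
      obtain ⟨k, rfl⟩ := vv_surj (hsub (show r ∈ ({vv i, vv j, r} : Set E3) by simp))
      unfold IsGoldenTriangle at hg
      have h1 : dist (vv i) (vv j) = 2 * Real.goldenRatio ∨ dist (vv i) (vv j) = 2 := by
        have : dist (vv i) (vv j) ∈
            ({2 * Real.goldenRatio, 2 * Real.goldenRatio, 2} : Multiset ℝ) := by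
          rw [← hg]; simp
        simpa using this
      have h2 : dist (vv j) (vv k) = 2 * Real.goldenRatio ∨ dist (vv j) (vv k) = 2 := by
        have : dist (vv j) (vv k) ∈
            ({2 * Real.goldenRatio, 2 * Real.goldenRatio, 2} : Multiset ℝ) := by
          rw [← hg]; simp
        simpa using this
      have h3 : dist (vv i) (vv k) = 2 * Real.goldenRatio ∨ dist (vv i) (vv k) = 2 := by
        have : dist (vv i) (vv k) ∈
            ({2 * Real.goldenRatio, 2 * Real.goldenRatio, 2} : Multiset ℝ) := by
          rw [← hg]; simp
        simpa using this
      rcases h1 with h1 | h1 <;> rcases h2 with h2 | h2 <;> rcases h3 with h3 | h3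
      · -- x x x : contradiction
        rw [h1, h2, h3] at hg
        have : (2 : ℝ) ∈ ({2 * Real.goldenRatio, 2 * Real.goldenRatio, 2 * Real.goldenRatio} : Multiset ℝ) := by
          rw [hg]; simp
        simp at this
        linarith [Real.one_lt_goldenRatio]
      · -- x x 2 : good, triple (i, j, k)
        refine ⟨{i, j, k}, Finset.mem_image_of_mem _ (Finset.mem_filter.mpr
          ⟨Finset.mem_univ (i, j, k),
           dd_of_dist_long h1, dd_of_dist_long h2, dd_of_dist_edge h3⟩), ?_⟩
        simp [Set.image_insert_eq]
      · -- x 2 x : good, triple (j, i, k)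
        refine ⟨{j, i, k}, Finset.mem_image_of_mem _ (Finset.mem_filter.mpr
          ⟨Finset.mem_univ (j, i, k),
           dd_of_dist_long (by rwa [dist_comm] at h1), dd_of_dist_long h3,
           dd_of_dist_edge h2⟩), ?_⟩
        ext x
        simp only [Set.image_insert_eq, Set.image_singleton, Finset.coe_insert,
          Finset.coe_singleton, Set.mem_insert_iff, Set.mem_singleton_iff]
        constructor <;> rintro (h | h | h) <;> simp only [h, true_or, or_true]
      · -- x 2 2 : contradiction
        rw [h1, h2, h3] at hg
        have := congrArg (Multiset.count 2) hg
        simp [Multiset.count_cons, hxy] at this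
      · -- 2 x x : good, triple (j, k, i)
        refine ⟨{j, k, i}, Finset.mem_image_of_mem _ (Finset.mem_filter.mpr
          ⟨Finset.mem_univ (j, k, i),
           dd_of_dist_long h2, dd_of_dist_long (by rwa [dist_comm] at h3),
           dd_of_dist_edge (by rwa [dist_comm] at h1)⟩), ?_⟩
        ext x
        simp only [Set.image_insert_eq, Set.image_singleton, Finset.coe_insert,
          Finset.coe_singleton, Set.mem_insert_iff, Set.mem_singleton_iff]
        constructor <;> rintro (h | h | h) <;> simp only [h, true_or, or_true]
      · -- 2 x 2 : contradiction
        rw [h1, h2, h3] at hg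
        have := congrArg (Multiset.count 2) hg
        simp [Multiset.count_cons, hxy] at this
      · -- 2 2 x : contradiction
        rw [h1, h2, h3] at hg
        have := congrArg (Multiset.count 2) hg
        simp [Multiset.count_cons, hxy] at this
      · -- 2 2 2 : contradiction
        rw [h1, h2, h3] at hg
        have : (2 * Real.goldenRatio : ℝ) ∈ ({(2 : ℝ), 2, 2} : Multiset ℝ) := by
          rw [hg]; simp
        simp at this
        linarith [Real.one_lt_goldenRatio]
    · rintro ⟨t, ht, rfl⟩
      rw [TT, Finset.mem_image] at ht
      obtain ⟨⟨i, j, k⟩, hx, rfl⟩ := ht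
      obtain ⟨-, h1, h2, h3⟩ := Finset.mem_filter.mp hx
      refine ⟨?_, vv i, vv j, vv k, ?_, ?_⟩
      · rintro _ ⟨m, -, rfl⟩; exact vv_mem m
      · simp [Set.image_insert_eq]
      · unfold IsGoldenTriangle
        rw [dist_of_dd_long h1, dist_of_dd_long h2, dist_of_dd_edge h3]
  rw [key, Set.ncard_coe_finset, Finset.card_image_of_injective _ himg, TT_card]


end
end
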